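/- Identification of the direct standardization parameter: Assume no unmeasured confounding. Let 𝒳' ⊆ 𝒳 be measurable with P(X ∈ 𝒳') > 0, fix a ∈ Fin m, and assume that π(a|X) > 0 holds P-a.s. on the event {X ∈ 𝒳'}. Then E[f(X, a, U) | X ∈ 𝒳'] = E[μ(a, X) | X ∈ 𝒳']; that is, the mean counterfactual success rate had all attempts in the reference population been assigned to player a equals the conditional mean of the outcome regression μ(a, X). -/

import Mathlib

open MeasureTheory ProbabilityTheory
open scoped ENNReal NNReal


/-- Auxiliary: the σ-algebra generated by a map. -/
@[reducible] def idsSigma {Ω β : Type*} [MeasurableSpace β] (X : Ω → β) :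
    MeasurableSpace Ω := MeasurableSpace.comap X inferInstance

/-- Identification of the direct standardization parameter. -/
theorem identification_direct_standardization
    {Ω 𝒳 𝒰 : Type*} [MeasurableSpace Ω] [StandardBorelSpace Ω]
    [MeasurableSpace 𝒳] [StandardBorelSpace 𝒳]
    [MeasurableSpace 𝒰] [StandardBorelSpace 𝒰]
    (P : Measure Ω) [IsProbabilityMeasure P]
    (m : ℕ) (hm : 1 ≤ m)
    (X : Ω → 𝒳) (U : Ω → 𝒰) (A : Ω → Fin m)
    (hX : Measurable X) (hU : Measurable U) (hA : Measurable A)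
    (f : 𝒳 → Fin m → 𝒰 → ℝ)
    (hf : Measurable fun p : 𝒳 × Fin m × 𝒰 => f p.1 p.2.1 p.2.2)
    (C : ℝ) (hfbdd : ∀ x b u, |f x b u| ≤ C)
    -- propensity scores: π(b|X) is a version of E[1{A=b} | σ(X)]
    (π : Fin m → 𝒳 → ℝ) (hπmeas : ∀ b, Measurable (π b))
    (hπ01 : ∀ b x, 0 ≤ π b x ∧ π b x ≤ 1)
    (hπ : ∀ b, (fun ω => π b (X ω)) =ᵐ[P]
      P[fun ω => (if A ω = b then (1 : ℝ) else 0) | MeasurableSpace.comap X inferInstance])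
    -- outcome regression: μ(b,X)·π(b|X) is a version of E[1{A=b}·Y | σ(X)]
    (μreg : Fin m → 𝒳 → ℝ) (hμmeas : ∀ b, Measurable (μreg b))
    (Cμ : ℝ) (hμbdd : ∀ b x, |μreg b x| ≤ Cμ)
    (hμ : ∀ b, (fun ω => μreg b (X ω) * π b (X ω)) =ᵐ[P]
      P[fun ω => (if A ω = b then (1 : ℝ) else 0) * f (X ω) (A ω) (U ω) |
        MeasurableSpace.comap X inferInstance])
    -- no unmeasured confounding: A ⫫ U | σ(X)
    (hNUC : CondIndepFun (MeasurableSpace.comap X inferInstance) hX.comap_le A U P)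
    -- reference population and focal player
    (𝒳' : Set 𝒳) (h𝒳' : MeasurableSet 𝒳') (a : Fin m)
    (E : Set Ω) (hE : E = {ω | X ω ∈ 𝒳'})
    (hPE : 0 < P E)
    -- positivity on the reference population
    (hpos : ∀ᵐ ω ∂P, X ω ∈ 𝒳' → 0 < π a (X ω)) :
    (∫ ω in E, f (X ω) a (U ω) ∂P) / (P E).toReal
      = (∫ ω in E, μreg a (X ω) ∂P) / (P E).toReal := by
  classical
  have hmle : idsSigma X ≤ (inferInstance : MeasurableSpace Ω) := hX.comap_le
  haveI : SigmaFinite (P.trim hmle) := inferInstance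
  -- basic objects
  set g : Ω → ℝ := fun ω => f (X ω) a (U ω) with hgdef
  have hgmeas : Measurable g := hf.comp (hX.prodMk (measurable_const.prodMk hU))
  set I : Ω → ℝ := fun ω => if A ω = a then (1 : ℝ) else 0 with hIdef
  have hIind : I = (A ⁻¹' {a}).indicator (fun _ => (1 : ℝ)) := by
    funext ω; by_cases h : A ω = a <;> simp [hIdef, Set.indicator_apply, h]
  have hImeas : Measurable I := by
    rw [hIind]; exact measurable_const.indicator (hA (measurableSet_singleton a))
  have hI01 : ∀ ω, 0 ≤ I ω ∧ I ω ≤ 1 := by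
    intro ω; by_cases h : A ω = a <;> simp [hIdef, h]
  -- nonempty Ω and C ≥ 0
  have hΩne : Nonempty Ω := by
    by_contra h
    rw [not_nonempty_iff] at h
    have : P Set.univ = 1 := measure_univ
    simp [Set.univ_eq_empty_iff.mpr h] at this
  obtain ⟨ω₀⟩ := hΩne
  have hC0 : 0 ≤ C := le_trans (abs_nonneg _) (hfbdd (X ω₀) a (U ω₀))
  -- integrability of bounded measurable functions
  have hbint : ∀ (h : Ω → ℝ) (c : ℝ), Measurable h → (∀ ω, |h ω| ≤ c) → Integrable h P := by
    intro h c hh hbd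
    exact (integrable_const c).mono' hh.aestronglyMeasurable
      (Filter.Eventually.of_forall fun ω => by simpa [Real.norm_eq_abs] using hbd ω)
  have intg : Integrable g P := hbint g C hgmeas fun ω => hfbdd _ _ _
  have intI : Integrable I P := hbint I 1 hImeas fun ω => by
    by_cases h : A ω = a <;> simp [hIdef, h]
  have hπX : Measurable fun ω => π a (X ω) := (hπmeas a).comp hX
  have hπXm : Measurable[idsSigma X] fun ω => π a (X ω) :=
    (hπmeas a).comp (Measurable.of_comap_le le_rfl)
  have hπsm : StronglyMeasurable[idsSigma X] fun ω => π a (X ω) := hπXm.stronglyMeasurable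
  have hπabs : ∀ ω, |π a (X ω)| ≤ 1 := fun ω =>
    abs_le.mpr ⟨by linarith [(hπ01 a (X ω)).1], (hπ01 a (X ω)).2⟩
  have intπ : Integrable (fun ω => π a (X ω)) P := hbint _ 1 hπX hπabs
  -- the sub-σ-algebra generated by X and U
  have hle1 : idsSigma X ≤ idsSigma X ⊔ idsSigma U := le_sup_left
  have hle2 : idsSigma U ≤ idsSigma X ⊔ idsSigma U := le_sup_right
  have hM : idsSigma X ⊔ idsSigma U ≤ (inferInstance : MeasurableSpace Ω) :=
    sup_le hmle hU.comap_le
  have hXM : Measurable[(idsSigma X ⊔ idsSigma U)] X := Measurable.of_comap_le hle1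
  have hUM : Measurable[(idsSigma X ⊔ idsSigma U)] U := Measurable.of_comap_le hle2
  have hgM : Measurable[(idsSigma X ⊔ idsSigma U)] g := hf.comp (hXM.prodMk (measurable_const.prodMk hUM))
  -- π-system
  set πsys : Set (Set Ω) :=
    {d | ∃ s, MeasurableSet[idsSigma X] s ∧ ∃ t : Set 𝒰, MeasurableSet t ∧ d = s ∩ U ⁻¹' t}
    with hπsysdef
  have hpi : IsPiSystem πsys := by
    rintro d1 ⟨s1, hs1, t1, ht1, rfl⟩ d2 ⟨s2, hs2, t2, ht2, rfl⟩ -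
    refine ⟨s1 ∩ s2, hs1.inter hs2, t1 ∩ t2, ht1.inter ht2, ?_⟩
    rw [Set.preimage_inter]; ext ω
    simp only [Set.mem_inter_iff, Set.mem_preimage]; tauto
  have hgen : (idsSigma X ⊔ idsSigma U) = MeasurableSpace.generateFrom πsys := by
    apply le_antisymm
    · refine sup_le ?_ ?_
      · intro s hs
        exact MeasurableSpace.measurableSet_generateFrom
          ⟨s, hs, Set.univ, MeasurableSet.univ, by simp⟩
      · rintro r ⟨t, ht, rfl⟩
        exact MeasurableSpace.measurableSet_generateFrom
          ⟨Set.univ, MeasurableSet.univ, t, ht, by simp⟩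
    · refine MeasurableSpace.generateFrom_le ?_
      rintro d ⟨s, hs, t, ht, rfl⟩
      exact (hle1 s hs).inter (hle2 (U ⁻¹' t) ⟨t, ht, rfl⟩)
  -- the two measures
  set ν₁ : Measure Ω := P.withDensity (fun ω => ENNReal.ofReal (I ω)) with hν₁def
  set ν₂ : Measure Ω := P.withDensity (fun ω => ENNReal.ofReal (π a (X ω))) with hν₂def
  have hν₁app : ∀ D : Set Ω, MeasurableSet D → ν₁ D = ENNReal.ofReal (∫ ω in D, I ω ∂P) := by
    intro D hD
    rw [hν₁def, withDensity_apply _ hD,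
      ← ofReal_integral_eq_lintegral_ofReal intI.restrict
        (Filter.Eventually.of_forall fun ω => (hI01 ω).1)]
  have hν₂app : ∀ D : Set Ω, MeasurableSet D →
      ν₂ D = ENNReal.ofReal (∫ ω in D, π a (X ω) ∂P) := by
    intro D hD
    rw [hν₂def, withDensity_apply _ hD,
      ← ofReal_integral_eq_lintegral_ofReal intπ.restrict
        (Filter.Eventually.of_forall fun ω => (hπ01 a (X ω)).1)]
  haveI : IsFiniteMeasure ν₁ := by
    constructor
    rw [hν₁app Set.univ MeasurableSet.univ]
    exact ENNReal.ofReal_lt_top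
  haveI : IsFiniteMeasure ν₂ := by
    constructor
    rw [hν₂app Set.univ MeasurableSet.univ]
    exact ENNReal.ofReal_lt_top
  -- the propensity score as a conditional expectation
  have hπa : (fun ω => π a (X ω)) =ᵐ[P] P[I|idsSigma X] := by rw [hIdef]; exact hπ a
  have hcondI : P[I|idsSigma X] = P⟦A ⁻¹' {a}|idsSigma X⟧ := by rw [hIind]
  -- conditional independence at the level of conditional expectations
  have hprod : ∀ t : Set 𝒰, MeasurableSet t →
      (P⟦A ⁻¹' {a} ∩ U ⁻¹' t|idsSigma X⟧) =ᵐ[P]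
        fun ω => (P⟦A ⁻¹' {a}|idsSigma X⟧) ω * (P⟦U ⁻¹' t|idsSigma X⟧) ω := fun t ht =>
    (condIndepFun_iff_condExp_inter_preimage_eq_mul hA hU).mp hNUC {a} t
      (measurableSet_singleton a) ht
  -- key set-integral identity
  have key : ∀ s : Set Ω, MeasurableSet[idsSigma X] s → ∀ t : Set 𝒰, MeasurableSet t →
      ∫ ω in s ∩ U ⁻¹' t, I ω ∂P = ∫ ω in s ∩ U ⁻¹' t, π a (X ω) ∂P := by
    intro s hs t ht
    have hrt : MeasurableSet (U ⁻¹' t) := hU ht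
    set χ : Ω → ℝ := (U ⁻¹' t).indicator (fun _ => (1 : ℝ)) with hχdef
    have hχmeas : Measurable χ := measurable_const.indicator hrt
    have hχ01 : ∀ ω, |χ ω| ≤ 1 := fun ω => by
      by_cases h : ω ∈ U ⁻¹' t <;> simp [hχdef, Set.indicator_apply, h]
    have intχ : Integrable χ P := hbint χ 1 hχmeas hχ01
    have intInd : Integrable ((A ⁻¹' {a} ∩ U ⁻¹' t).indicator (fun _ => (1 : ℝ))) P :=
      hbint _ 1 (measurable_const.indicator ((hA (measurableSet_singleton a)).inter hrt))
        (fun ω => by by_cases h : ω ∈ A ⁻¹' {a} ∩ U ⁻¹' t <;> simp [Set.indicator_apply, h])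
    have intπχ : Integrable ((fun ω => π a (X ω)) * χ) P := by
      refine hbint _ 1 (hπX.mul hχmeas) fun ω => ?_
      have : |π a (X ω) * χ ω| = |π a (X ω)| * |χ ω| := abs_mul _ _
      calc |((fun ω => π a (X ω)) * χ) ω| = |π a (X ω)| * |χ ω| := by
            simp [Pi.mul_apply, abs_mul]
        _ ≤ 1 * 1 := mul_le_mul (hπabs ω) (hχ01 ω) (abs_nonneg _) zero_le_one
        _ = 1 := one_mul 1
    calc ∫ ω in s ∩ U ⁻¹' t, I ω ∂P
        = ∫ ω in s, (A ⁻¹' {a} ∩ U ⁻¹' t).indicator (fun _ => (1 : ℝ)) ω ∂P := by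
          rw [← setIntegral_indicator hrt]
          refine integral_congr_ae (Filter.Eventually.of_forall fun ω => ?_)
          by_cases h1 : ω ∈ U ⁻¹' t <;> by_cases h2 : A ω = a <;>
            simp [Set.indicator_apply, h1, h2, hIdef]
      _ = ∫ ω in s, (P⟦A ⁻¹' {a} ∩ U ⁻¹' t|idsSigma X⟧) ω ∂P :=
          (setIntegral_condExp hmle intInd hs).symm
      _ = ∫ ω in s, π a (X ω) * (P⟦U ⁻¹' t|idsSigma X⟧) ω ∂P := by
          refine integral_congr_ae (ae_restrict_of_ae ?_)
          filter_upwards [hprod t ht, hπa] with ω h1 h2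
          rw [h1, ← hcondI, ← h2]
      _ = ∫ ω in s, ((fun ω => π a (X ω)) * P[χ|idsSigma X]) ω ∂P := by
          refine integral_congr_ae (ae_restrict_of_ae ?_)
          have : P[χ|idsSigma X] = P⟦U ⁻¹' t|idsSigma X⟧ := by rw [hχdef]
          rw [this]
          exact Filter.Eventually.of_forall fun ω => rfl
      _ = ∫ ω in s, (P[(fun ω => π a (X ω)) * χ|idsSigma X]) ω ∂P := by
          refine integral_congr_ae (ae_restrict_of_ae ?_)
          exact (condExp_mul_of_stronglyMeasurable_left hπsm intπχ intχ).symm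
      _ = ∫ ω in s, ((fun ω => π a (X ω)) * χ) ω ∂P := setIntegral_condExp hmle intπχ hs
      _ = ∫ ω in s ∩ U ⁻¹' t, π a (X ω) ∂P := by
          rw [← setIntegral_indicator hrt]
          refine integral_congr_ae (Filter.Eventually.of_forall fun ω => ?_)
          by_cases h : ω ∈ U ⁻¹' t <;> simp [Pi.mul_apply, hχdef, Set.indicator_apply, h]
  -- the two measures agree on the π-system, hence on (idsSigma X ⊔ idsSigma U)
  have hνeq : ∀ d ∈ πsys, ν₁ d = ν₂ d := by
    rintro d ⟨s, hs, t, ht, rfl⟩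
    have hd : MeasurableSet (s ∩ U ⁻¹' t) := (hmle s hs).inter (hU ht)
    rw [hν₁app _ hd, hν₂app _ hd, key s hs t ht]
  have hunivmem : Set.univ ∈ πsys :=
    ⟨Set.univ, MeasurableSet.univ, Set.univ, MeasurableSet.univ, by simp⟩
  have htrim : ν₁.trim hM = ν₂.trim hM := by
    refine ext_of_generate_finite πsys hgen hpi ?_ ?_
    · intro d hd
      have hdM : MeasurableSet[(idsSigma X ⊔ idsSigma U)] d := by
        rw [hgen]; exact MeasurableSpace.measurableSet_generateFrom hd
      rw [trim_measurableSet_eq hM hdM, trim_measurableSet_eq hM hdM]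
      exact hνeq d hd
    · rw [trim_measurableSet_eq hM MeasurableSet.univ,
        trim_measurableSet_eq hM MeasurableSet.univ]
      exact hνeq _ hunivmem
  -- transfer to integrals of (idsSigma X ⊔ idsSigma U)-measurable functions
  have hIntEq : ∀ h : Ω → ℝ, Measurable[(idsSigma X ⊔ idsSigma U)] h →
      ∫ ω, I ω * h ω ∂P = ∫ ω, π a (X ω) * h ω ∂P := by
    intro h hh
    have hsm : StronglyMeasurable[(idsSigma X ⊔ idsSigma U)] h := hh.stronglyMeasurable
    have e1 : ∫ ω, h ω ∂ν₁ = ∫ ω, I ω * h ω ∂P := by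
      rw [hν₁def,
        show (fun ω => ENNReal.ofReal (I ω)) = fun ω => ((I ω).toNNReal : ℝ≥0∞) from rfl,
        integral_withDensity_eq_integral_smul (show Measurable fun ω => (I ω).toNNReal from measurable_real_toNNReal.comp hImeas) h]
      refine integral_congr_ae (Filter.Eventually.of_forall fun ω => ?_)
      simp [NNReal.smul_def, Real.coe_toNNReal _ (hI01 ω).1]
    have e2 : ∫ ω, h ω ∂ν₂ = ∫ ω, π a (X ω) * h ω ∂P := by
      rw [hν₂def,
        show (fun ω => ENNReal.ofReal (π a (X ω)))
          = fun ω => ((π a (X ω)).toNNReal : ℝ≥0∞) from rfl,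
        integral_withDensity_eq_integral_smul (show Measurable fun ω => (π a (X ω)).toNNReal from measurable_real_toNNReal.comp hπX) h]
      refine integral_congr_ae (Filter.Eventually.of_forall fun ω => ?_)
      simp [NNReal.smul_def, Real.coe_toNNReal _ (hπ01 a (X ω)).1]
    calc ∫ ω, I ω * h ω ∂P = ∫ ω, h ω ∂ν₁ := e1.symm
      _ = ∫ ω, h ω ∂(ν₁.trim hM) := integral_trim hM hsm
      _ = ∫ ω, h ω ∂(ν₂.trim hM) := by rw [htrim]
      _ = ∫ ω, h ω ∂ν₂ := (integral_trim hM hsm).symm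
      _ = ∫ ω, π a (X ω) * h ω ∂P := e2
  -- integrabilities
  have intIg : Integrable (fun ω => I ω * g ω) P := by
    refine hbint _ C (hImeas.mul hgmeas) fun ω => ?_
    by_cases h : A ω = a
    · simpa [hIdef, h, hgdef] using hfbdd (X ω) a (U ω)
    · simpa [hIdef, h] using hC0
  have intπg : Integrable ((fun ω => π a (X ω)) * g) P := by
    refine hbint _ C (hπX.mul hgmeas) fun ω => ?_
    calc |((fun ω => π a (X ω)) * g) ω| = |π a (X ω)| * |g ω| := by simp [Pi.mul_apply, abs_mul]
      _ ≤ 1 * |g ω| := by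
          have := hπabs ω
          have := abs_nonneg (g ω)
          nlinarith
      _ = |g ω| := one_mul _
      _ ≤ C := hfbdd _ _ _
  -- the candidate is a version of the conditional expectation of I·g
  have hcand : ((fun ω => π a (X ω)) * P[g|idsSigma X]) =ᵐ[P] P[(fun ω => I ω * g ω)|idsSigma X] := by
    have intcand : Integrable ((fun ω => π a (X ω)) * P[g|idsSigma X]) P :=
      Integrable.bdd_mul integrable_condExp hπX.aestronglyMeasurable
        (c := 1) (Filter.Eventually.of_forall fun ω => by rw [Real.norm_eq_abs]; exact hπabs ω)
    refine ae_eq_condExp_of_forall_setIntegral_eq hmle intIg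
      (fun S hS hPS => intcand.integrableOn) (fun S hS hPS => ?_)
      ((hπsm.mul stronglyMeasurable_condExp).aestronglyMeasurable)
    have hSM : MeasurableSet[(idsSigma X ⊔ idsSigma U)] S := hle1 S hS
    have hgind : Measurable[(idsSigma X ⊔ idsSigma U)] (S.indicator g) := hgM.indicator hSM
    have hind : ∀ φ : Ω → ℝ, ∫ ω, φ ω * S.indicator g ω ∂P = ∫ ω in S, φ ω * g ω ∂P := by
      intro φ
      rw [← integral_indicator (hmle S hS)]
      refine integral_congr_ae (Filter.Eventually.of_forall fun ω => ?_)
      by_cases h : ω ∈ S <;> simp [Set.indicator_apply, h]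
    calc ∫ ω in S, ((fun ω => π a (X ω)) * P[g|idsSigma X]) ω ∂P
        = ∫ ω in S, (P[(fun ω => π a (X ω)) * g|idsSigma X]) ω ∂P := by
          refine integral_congr_ae (ae_restrict_of_ae ?_)
          exact (condExp_mul_of_stronglyMeasurable_left hπsm intπg intg).symm
      _ = ∫ ω in S, ((fun ω => π a (X ω)) * g) ω ∂P := setIntegral_condExp hmle intπg hS
      _ = ∫ ω, π a (X ω) * S.indicator g ω ∂P := (hind _).symm
      _ = ∫ ω, I ω * S.indicator g ω ∂P := (hIntEq _ hgind).symm
      _ = ∫ ω in S, I ω * g ω ∂P := hind I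
  -- combine with the outcome-regression hypothesis
  have hμa : (fun ω => μreg a (X ω) * π a (X ω)) =ᵐ[P] P[(fun ω => I ω * g ω)|idsSigma X] := by
    have h0 : (fun ω => (if A ω = a then (1 : ℝ) else 0) * f (X ω) (A ω) (U ω))
        = fun ω => I ω * g ω := by
      funext ω
      by_cases h : A ω = a <;> simp [hIdef, hgdef, h]
    exact (hμ a).trans (by rw [h0])
  have hfinal : ∀ᵐ ω ∂P, X ω ∈ 𝒳' → μreg a (X ω) = (P[g|idsSigma X]) ω := by
    filter_upwards [hμa, hcand, hpos] with ω h1 h2 h3 hx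
    have hπpos := h3 hx
    have heq : μreg a (X ω) * π a (X ω) = π a (X ω) * (P[g|idsSigma X]) ω := by
      rw [h1, ← h2]; rfl
    exact mul_right_cancel₀ hπpos.ne' (heq.trans (mul_comm _ _))
  -- conclude
  have hEm : MeasurableSet[idsSigma X] E := by rw [hE]; exact ⟨𝒳', h𝒳', rfl⟩
  have hEmeas : MeasurableSet E := hmle E hEm
  have step1 : ∫ ω in E, g ω ∂P = ∫ ω in E, (P[g|idsSigma X]) ω ∂P :=
    (setIntegral_condExp hmle intg hEm).symm
  have step2 : ∫ ω in E, (P[g|idsSigma X]) ω ∂P = ∫ ω in E, μreg a (X ω) ∂P := by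
    refine integral_congr_ae ?_
    have h1 : ∀ᵐ ω ∂P.restrict E, X ω ∈ 𝒳' := by
      filter_upwards [ae_restrict_mem hEmeas] with ω hω
      rw [hE] at hω; exact hω
    filter_upwards [ae_restrict_of_ae hfinal, h1] with ω h2 h3
    exact (h2 h3).symm
  rw [step1, step2]
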